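/- For all real α ≥ 1/2 and all real x, c with 0 < x ≤ c < 1, we have 1/(1-x)^α ≤ 1 + (1/(1-c))^(α+1) · α · x. -/

import Mathlib

theorem stmt_1 (α x c : ℝ) (hα : 1/2 ≤ α) (hx : 0 < x) (hxc : x ≤ c) (hc : c < 1) :
    1 / (1 - x) ^ α ≤ 1 + (1 / (1 - c)) ^ (α + 1) * α * x := by
  have hx1 : x < 1 := lt_of_le_of_lt hxc hc
  have ha : (0:ℝ) < 1 - x := by linarith
  have hc' : (0:ℝ) < 1 - c := by linarith
  have hα0 : (0:ℝ) ≤ α := by linarith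
  have hbern : 1 + (α+1) * (-x) ≤ (1 + (-x)) ^ (α+1) :=
    one_add_mul_self_le_rpow_one_add (by linarith) (by linarith)
  have hA : (0:ℝ) < (1-x)^α := Real.rpow_pos_of_pos ha _
  have hB : (0:ℝ) < (1-x)^(α+1) := Real.rpow_pos_of_pos ha _
  have hBA : (1-x)^(α+1) = (1-x)^α * (1-x) := by
    rw [Real.rpow_add ha, Real.rpow_one]
  have key : 1 - x ≤ (1-x)^(α+1) + α*x := by
    have h1 : 1 + (α+1)*(-x) ≤ (1-x)^(α+1) := by
      convert hbern using 2
      ring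
    nlinarith
  have step1 : 1 / (1-x)^α ≤ 1 + (1/(1-x))^(α+1) * α * x := by
    have hinv : (1/(1-x))^(α+1) = 1/(1-x)^(α+1) := by
      rw [one_div, one_div, ← Real.inv_rpow ha.le]
    have e1 : 1 / (1-x)^α = (1-x) / (1-x)^(α+1) := by
      rw [hBA]; field_simp
    have e2 : 1 + 1/(1-x)^(α+1) * α * x = ((1-x)^(α+1) + α*x)/(1-x)^(α+1) := by
      field_simp
    rw [hinv, e1, e2]
    gcongr
  refine step1.trans ?_
  have hmono : (1/(1-x)) ≤ (1/(1-c)) := one_div_le_one_div_of_le hc' (by linarith)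
  have h2 : (1/(1-x))^(α+1) ≤ (1/(1-c))^(α+1) :=
    Real.rpow_le_rpow (by positivity) hmono (by linarith)
  nlinarith [mul_le_mul_of_nonneg_right h2 (mul_nonneg hα0 hx.le)]
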